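/- With the prior π(β, A) = 1 in the balanced model, reparametrizing B = V/(V+A), the marginal posterior density of B given y is proportional to B^{(m-p-4)/2} exp(-BS/(2V)) on (0,1), where S = ||y - X β̂||²; and its mode is min((m-p-4)V/S, 1) when m > p + 4. -/

import Mathlib

open Matrix MeasureTheory Real

noncomputable def lsq {m p : ℕ} (X : Matrix (Fin m) (Fin p) ℝ) (y : Fin m → ℝ) : Fin p → ℝ :=
  ((Xᵀ * X)⁻¹ * Xᵀ).mulVec y

noncomputable def rss {m p : ℕ} (X : Matrix (Fin m) (Fin p) ℝ) (y : Fin m → ℝ) : ℝ :=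
  ∑ i, (y i - X.mulVec (lsq X y) i) ^ 2

/-- The unnormalized posterior density of `B` on `(0,1)`:
`g(B) = B^{(m-p-4)/2} exp(-B S/(2V))`. -/
noncomputable def gB (m p : ℕ) (V S B : ℝ) : ℝ :=
  B ^ (((m : ℝ) - p - 4) / 2) * Real.exp (-B * S / (2 * V))

section Aux

variable {m p : ℕ} (X : Matrix (Fin m) (Fin p) ℝ)

lemma aux_rpow_le_exp_mul {x a : ℝ} (hx : 0 < x) (ha : 0 ≤ a) :
    x ^ a ≤ Real.exp (a * (x - 1)) := by
  have h1 : x ≤ Real.exp (x - 1) := by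
    have := Real.add_one_le_exp (x - 1); linarith
  calc x ^ a ≤ (Real.exp (x - 1)) ^ a := Real.rpow_le_rpow hx.le h1 ha
    _ = Real.exp (a * (x - 1)) := by
        rw [← Real.exp_log (Real.exp_pos _), ← Real.exp_mul]
        simp [Real.log_exp, mul_comm]

lemma aux_mode_le {a lam : ℝ} (ha : 0 < a) (hlam : 0 < lam) {B : ℝ} (hB0 : 0 < B) (hB1 : B ≤ 1) :
    B ^ a * Real.exp (-(lam * B)) ≤
      (min (a / lam) 1) ^ a * Real.exp (-(lam * min (a / lam) 1)) := by
  set B0 := a / lam with hB0def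
  have hB0pos : 0 < B0 := div_pos ha hlam
  rcases le_or_gt B0 1 with h | h
  · rw [min_eq_left h]
    have key : (B / B0) ^ a ≤ Real.exp (a * (B / B0 - 1)) :=
      aux_rpow_le_exp_mul (div_pos hB0 hB0pos) ha.le
    have hBa : B ^ a = B0 ^ a * (B / B0) ^ a := by
      rw [← Real.mul_rpow hB0pos.le (by positivity)]
      rw [mul_div_cancel₀ _ hB0pos.ne']
    rw [hBa]
    have harith : a * (B / B0 - 1) = lam * B - lam * B0 := by
      rw [hB0def]
      field_simp
    calc B0 ^ a * (B / B0) ^ a * Real.exp (-(lam * B))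
        ≤ B0 ^ a * Real.exp (a * (B / B0 - 1)) * Real.exp (-(lam * B)) := by
          apply mul_le_mul_of_nonneg_right _ (Real.exp_pos _).le
          exact mul_le_mul_of_nonneg_left key (by positivity)
      _ = B0 ^ a * Real.exp (-(lam * B0)) := by
          rw [mul_assoc, ← Real.exp_add, harith]; ring_nf
  · rw [min_eq_right h.le]
    have hlam_le : lam ≤ a := by
      rw [hB0def, lt_div_iff₀ hlam] at h; linarith
    have key : B ^ a ≤ Real.exp (a * (B - 1)) := aux_rpow_le_exp_mul hB0 ha.le
    have key2 : a * (B - 1) ≤ lam * (B - 1) := by nlinarith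
    calc B ^ a * Real.exp (-(lam * B)) ≤ Real.exp (lam * (B-1)) * Real.exp (-(lam * B)) := by
          apply mul_le_mul_of_nonneg_right _ (Real.exp_pos _).le
          exact key.trans (Real.exp_le_exp.2 key2)
      _ = Real.exp (-(lam * 1)) := by rw [← Real.exp_add]; ring_nf
      _ = (1:ℝ) ^ a * Real.exp (-(lam * 1)) := by rw [Real.one_rpow, one_mul]

lemma aux_mulVec_inj (hX : X.rank = p) : Function.Injective X.mulVecLin := by
  rw [← LinearMap.ker_eq_bot]
  have h := X.mulVecLin.finrank_range_add_finrank_ker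
  rw [show Module.finrank ℝ (LinearMap.range X.mulVecLin) = p from hX] at h
  simp only [Module.finrank_pi, Fintype.card_fin] at h
  have : Module.finrank ℝ (LinearMap.ker X.mulVecLin) = 0 := by omega
  exact Submodule.finrank_eq_zero.mp this

lemma aux_isUnit_XtX (hX : X.rank = p) : IsUnit ((Xᵀ * X).det) := by
  rw [← Matrix.isUnit_iff_isUnit_det, ← Matrix.mulVec_injective_iff_isUnit]
  have hker : LinearMap.ker (Xᵀ * X).mulVecLin = LinearMap.ker X.mulVecLin := by
    simpa using X.ker_mulVecLin_conjTranspose_mul_self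
  have : Function.Injective (Xᵀ * X).mulVecLin := by
    rw [← LinearMap.ker_eq_bot, hker, LinearMap.ker_eq_bot]
    exact aux_mulVec_inj X hX
  exact this

lemma aux_normal_eq (hX : X.rank = p) (y : Fin m → ℝ) :
    Xᵀ.mulVec (y - X.mulVec (lsq X y)) = 0 := by
  have h : Xᵀ.mulVec (X.mulVec (lsq X y)) = Xᵀ.mulVec y := by
    rw [lsq, Matrix.mulVec_mulVec, Matrix.mulVec_mulVec,
      Matrix.mul_nonsing_inv_cancel_left _ _ (aux_isUnit_XtX X hX)]
  rw [Matrix.mulVec_sub, h, sub_self]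

lemma aux_decomp (hX : X.rank = p) (y : Fin m → ℝ) (β : Fin p → ℝ) :
    ∑ i, (y i - X.mulVec β i) ^ 2
      = rss X y + ∑ i, (X.mulVec (lsq X y - β) i) ^ 2 := by
  have hcross : (y - X.mulVec (lsq X y)) ⬝ᵥ X.mulVec (lsq X y - β) = 0 := by
    rw [Matrix.dotProduct_mulVec, ← Matrix.mulVec_transpose, aux_normal_eq X hX y]
    simp
  have hpt : ∀ i, y i - X.mulVec β i
      = (y i - X.mulVec (lsq X y) i) + X.mulVec (lsq X y - β) i := by
    intro i
    rw [Matrix.mulVec_sub]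
    simp
  calc ∑ i, (y i - X.mulVec β i) ^ 2
      = ∑ i, ((y i - X.mulVec (lsq X y) i) ^ 2
          + 2 * ((y i - X.mulVec (lsq X y) i) * X.mulVec (lsq X y - β) i)
          + X.mulVec (lsq X y - β) i ^ 2) := by
        refine Finset.sum_congr rfl fun i _ => ?_; rw [hpt i]; ring
    _ = rss X y + ∑ i, (X.mulVec (lsq X y - β) i) ^ 2 := by
        rw [Finset.sum_add_distrib, Finset.sum_add_distrib, rss, ← Finset.mul_sum]
        have : ∑ i, ((y i - X.mulVec (lsq X y) i) * X.mulVec (lsq X y - β) i) = 0 := by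
          simpa only [dotProduct, Pi.sub_apply] using hcross
        rw [this]; ring

lemma aux_coercive (hinj : Function.Injective X.mulVecLin) :
    ∃ ε > 0, ∀ v : Fin p → ℝ, ε * ∑ i, v i ^ 2 ≤ ∑ i, (X.mulVec v i) ^ 2 := by
  let E := EuclideanSpace ℝ (Fin p)
  let F := EuclideanSpace ℝ (Fin m)
  let eP := WithLp.linearEquiv 2 ℝ (Fin p → ℝ)
  let eM := WithLp.linearEquiv 2 ℝ (Fin m → ℝ)
  let f : E →ₗ[ℝ] F := eM.symm.toLinearMap ∘ₗ X.mulVecLin ∘ₗ eP.toLinearMap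
  have hker : LinearMap.ker f = ⊥ := by
    rw [LinearMap.ker_eq_bot]
    intro a b hab
    apply eP.injective
    apply hinj
    simpa [f] using congrArg eM hab
  obtain ⟨K, hK, hanti⟩ := f.exists_antilipschitzWith hker
  refine ⟨((K : ℝ) ^ 2)⁻¹, by positivity, fun v => ?_⟩
  have h := hanti.le_mul_dist (eP.symm v) 0
  simp only [dist_zero_right, map_zero] at h
  have h' : ‖eP.symm v‖ ≤ K * ‖f (eP.symm v)‖ := by simpa using h
  have hnv : ‖eP.symm v‖ ^ 2 = ∑ i, v i ^ 2 := by
    rw [EuclideanSpace.norm_eq, Real.sq_sqrt (by positivity)]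
    simp [eP, sq_abs]
  have hnf : ‖f (eP.symm v)‖ ^ 2 = ∑ i, (X.mulVec v i) ^ 2 := by
    rw [EuclideanSpace.norm_eq, Real.sq_sqrt (by positivity)]
    simp [f, eP, eM, sq_abs]
    rfl
  rw [inv_mul_le_iff₀ (by positivity), ← hnv, ← hnf, ← mul_pow]
  exact pow_le_pow_left₀ (norm_nonneg _) h' 2

lemma aux_integrable_g (hinj : Function.Injective X.mulVecLin) {V : ℝ} (hV : 0 < V) :
    Integrable (fun u : Fin p → ℝ => Real.exp (-(∑ i, (X.mulVec u i) ^ 2) / (2 * V))) := by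
  obtain ⟨ε, hε, hco⟩ := aux_coercive X hinj
  have hbd : Integrable (fun u : Fin p → ℝ =>
      ∏ i, Real.exp (-(ε / (2 * V)) * (u i) ^ 2)) := by
    apply Integrable.fintype_prod (f := fun _ : Fin p => fun t : ℝ => Real.exp (-(ε / (2*V)) * t ^ 2))
    intro i
    exact integrable_exp_neg_mul_sq (by positivity)
  refine hbd.mono' ?_ ?_
  · apply Continuous.aestronglyMeasurable
    have hc : Continuous fun u : Fin p → ℝ => ∑ i, (X.mulVec u i) ^ 2 := by
      apply continuous_finset_sum
      intro i _
      exact ((continuous_apply i).comp X.mulVecLin.continuous_of_finiteDimensional).pow 2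
    exact (Real.continuous_exp.comp ((hc.neg).div_const _))
  · refine Filter.Eventually.of_forall fun u => ?_
    rw [Real.norm_eq_abs, abs_of_pos (Real.exp_pos _), ← Real.exp_sum]
    apply Real.exp_le_exp.2
    have h2 : ∑ i, -(ε / (2 * V)) * u i ^ 2 = -(ε * ∑ i, u i ^ 2) / (2 * V) := by
      rw [← Finset.mul_sum]; ring
    rw [h2]
    exact (div_le_div_iff_of_pos_right (by positivity)).mpr (neg_le_neg (hco u))

lemma aux_const_algebra {V B : ℝ} (hV : 0 < V) (hB : 0 < B) (m p : ℕ) :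
    (Real.sqrt (2*π*(V/B)))⁻¹ ^ m * (Real.sqrt B ^ p)⁻¹ / B ^ 2
      = (2*π*V) ^ (-(m:ℝ)/2) * B ^ (((m:ℝ) - p - 4)/2) := by
  have h2πV : (0:ℝ) < 2*π*V := by positivity
  have ht : (0:ℝ) < 2*π*(V/B) := by positivity
  have hA : (Real.sqrt (2*π*(V/B)))⁻¹ ^ m
      = (2*π*V) ^ (-(m:ℝ)/2) * B ^ ((m:ℝ)/2) := by
    rw [Real.sqrt_eq_rpow, ← Real.rpow_neg ht.le, ← Real.rpow_natCast ((2*π*(V/B)) ^ (-(1/2):ℝ)) m,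
      ← Real.rpow_mul ht.le, show (2*π*(V/B)) = (2*π*V)/B by ring,
      Real.div_rpow h2πV.le hB.le, div_eq_mul_inv, ← Real.rpow_neg hB.le]
    congr 1
    · congr 1; ring
    · congr 1; ring
  have hB2 : (Real.sqrt B ^ p)⁻¹ = B ^ (-(p:ℝ)/2) := by
    rw [Real.sqrt_eq_rpow, ← Real.rpow_natCast (B ^ ((1:ℝ)/2)) p, ← Real.rpow_mul hB.le,
      ← Real.rpow_neg hB.le]
    congr 1; ring
  have hB3 : (B:ℝ) ^ (2:ℕ) = B ^ ((2:ℕ):ℝ) := (Real.rpow_natCast B 2).symm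
  rw [hA, hB2, hB3, div_eq_mul_inv, ← Real.rpow_neg hB.le, mul_assoc, mul_assoc,
    ← Real.rpow_add hB, ← Real.rpow_add hB]
  congr 1
  push_cast
  ring

end Aux

/-- With the prior `π(β, A) = 1` in the balanced model, reparametrizing
`B = V/(V+A)` (so that `π(β, B) ∝ B⁻²` and the marginal law of `y` given `(β, B)` is
`N(Xβ, (V/B) I_m)`), the marginal posterior density of `B` given `y`, obtained by
integrating out `β`, is proportional on `(0,1)` to `B^{(m-p-4)/2} exp(-BS/(2V))` with
`S = ‖y - Xβ̂‖²`; and for `m > p + 4` its mode is `min((m-p-4)V/S, 1)`. -/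
theorem statement14 {m p : ℕ} (hpm : p < m)
    (X : Matrix (Fin m) (Fin p) ℝ) (hX : X.rank = p)
    (y : Fin m → ℝ) (V : ℝ) (hV : 0 < V) (hS : 0 < rss X y) :
    ∃ c > 0,
      (∀ B ∈ Set.Ioo (0 : ℝ) 1,
        (∫ β : Fin p → ℝ,
            (∏ i, (Real.sqrt (2 * π * (V / B)))⁻¹ *
              Real.exp (-(y i - X.mulVec β i) ^ 2 / (2 * (V / B)))) / B ^ 2)
          = c * gB m p V (rss X y) B) ∧
      (m > p + 4 → ∀ B ∈ Set.Ioo (0 : ℝ) 1,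
        gB m p V (rss X y) B
          ≤ gB m p V (rss X y) (min (((m : ℝ) - p - 4) * V / rss X y) 1)) := by
  have hinj : Function.Injective X.mulVecLin := aux_mulVec_inj X hX
  set S := rss X y with hSdef
  set g : (Fin p → ℝ) → ℝ :=
    fun u => Real.exp (-(∑ i, (X.mulVec u i) ^ 2) / (2 * V)) with hg
  have hgint : Integrable g := aux_integrable_g X hinj hV
  set J := ∫ u, g u with hJ
  have hJpos : 0 < J := by
    rw [hJ, integral_pos_iff_support_of_nonneg (fun u => (Real.exp_pos _).le) hgint]
    have hs : Function.support g = Set.univ :=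
      Set.eq_univ_of_forall fun u => (Real.exp_pos _).ne'
    rw [hs]
    exact isOpen_univ.measure_pos volume ⟨0, trivial⟩
  refine ⟨(2*π*V) ^ (-(m:ℝ)/2) * J, by positivity, ?_, ?_⟩
  · -- the density computation
    rintro B ⟨hB0, hB1⟩
    have hsB : (0:ℝ) < Real.sqrt B := Real.sqrt_pos.mpr hB0
    have key : ∀ β : Fin p → ℝ,
        (∏ i, (Real.sqrt (2 * π * (V / B)))⁻¹ *
          Real.exp (-(y i - X.mulVec β i) ^ 2 / (2 * (V / B))))
        = (Real.sqrt (2*π*(V/B)))⁻¹ ^ m * Real.exp (-B * S / (2 * V)) *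
          g (Real.sqrt B • (lsq X y - β)) := by
      intro β
      rw [Finset.prod_mul_distrib, Finset.prod_const, Finset.card_univ, Fintype.card_fin,
        ← Real.exp_sum]
      simp only [hg]
      rw [mul_assoc ((Real.sqrt (2*π*(V/B)))⁻¹ ^ m), ← Real.exp_add]
      congr 1
      have hQ : ∑ i, (X.mulVec (Real.sqrt B • (lsq X y - β)) i) ^ 2
          = B * ∑ i, (X.mulVec (lsq X y - β) i) ^ 2 := by
        rw [Matrix.mulVec_smul]
        rw [Finset.mul_sum]
        refine Finset.sum_congr rfl fun i _ => ?_
        simp [mul_pow, Real.sq_sqrt hB0.le]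
      have e1 : ∑ i, -(y i - X.mulVec β i) ^ 2 / (2 * (V / B))
          = -(∑ i, (y i - X.mulVec β i) ^ 2) / (2 * (V / B)) := by
        rw [← Finset.sum_div, ← Finset.sum_neg_distrib]
      rw [e1, aux_decomp X hX y β, hQ, ← hSdef]
      field_simp
      ring
    have hT : (∫ β : Fin p → ℝ, g (Real.sqrt B • (lsq X y - β)))
        = (Real.sqrt B ^ p)⁻¹ * J := by
      have h1 : (∫ β : Fin p → ℝ, g (Real.sqrt B • (lsq X y - β)))
          = ∫ β : Fin p → ℝ, g (Real.sqrt B • β) := by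
        exact integral_sub_left_eq_self (fun w => g (Real.sqrt B • w)) volume (lsq X y)
      rw [h1, Measure.integral_comp_smul volume g (Real.sqrt B)]
      have hfr : Module.finrank ℝ (Fin p → ℝ) = p := by
        simp [Module.finrank_pi]
      rw [hfr, smul_eq_mul, abs_of_nonneg (by positivity)]
    calc (∫ β : Fin p → ℝ,
            (∏ i, (Real.sqrt (2 * π * (V / B)))⁻¹ *
              Real.exp (-(y i - X.mulVec β i) ^ 2 / (2 * (V / B)))) / B ^ 2)
        = (∫ β : Fin p → ℝ, (Real.sqrt (2*π*(V/B)))⁻¹ ^ m * Real.exp (-B * S / (2 * V)) *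
            g (Real.sqrt B • (lsq X y - β))) / B ^ 2 := by
          rw [integral_div]
          congr 1
          exact integral_congr_ae (Filter.Eventually.of_forall key)
      _ = ((Real.sqrt (2*π*(V/B)))⁻¹ ^ m * Real.exp (-B * S / (2 * V)) *
            ((Real.sqrt B ^ p)⁻¹ * J)) / B ^ 2 := by
          rw [integral_const_mul, hT]
      _ = ((Real.sqrt (2*π*(V/B)))⁻¹ ^ m * (Real.sqrt B ^ p)⁻¹ / B ^ 2) *
            (Real.exp (-B * S / (2 * V)) * J) := by ring
      _ = ((2*π*V) ^ (-(m:ℝ)/2) * B ^ (((m:ℝ) - p - 4)/2)) *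
            (Real.exp (-B * S / (2 * V)) * J) := by rw [aux_const_algebra hV hB0 m p]
      _ = (2*π*V) ^ (-(m:ℝ)/2) * J * gB m p V S B := by
          simp only [gB]; ring
  · -- the mode
    rintro hm4 B ⟨hB0, hB1⟩
    have ha : (0:ℝ) < ((m:ℝ) - p - 4) / 2 := by
      have : (p:ℝ) + 4 < m := by exact_mod_cast hm4
      linarith
    have hlam : (0:ℝ) < S / (2*V) := by positivity
    have hmin : min (((m:ℝ) - p - 4) * V / S) 1
        = min ((((m:ℝ) - p - 4)/2) / (S / (2*V))) 1 := by
      congr 1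
      field_simp
    have h := aux_mode_le ha hlam hB0 hB1.le
    rw [hmin]
    have harg : ∀ t : ℝ, -t * S / (2*V) = -((S/(2*V)) * t) := by
      intro t; field_simp
    simp only [gB, harg]
    exact h
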